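/- arXiv:2604.24809 — 2 statements merged into one kernel-verified Lean document; each statement's English description precedes it below -/
import Mathlib

section
/- SCA subsumes arbitrary linear combinations (regularized form of Corollary 4): let h_1, …, h_t be pairwise distinct vectors in ℝ^d and let α_1, …, α_t ∈ ℝ be arbitrary coefficients (not assumed non-negative or summing to one). With the composite spectral query w(θ) = Σ_{k=1}^{t} α_k w_k(θ), as σ → 0⁺ the Gaussian-regularized readout (4πσ)^{d/2} ∫_{ℝ^d} S(θ) · conj(w(θ)) · e^{−σ‖θ‖²} dθ converges to Σ_{k=1}^{t} α_k h_k. -/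
open MeasureTheory Real Filter RealInnerProductSpace

/-- The derivative characteristic summary `S(θ) = (i/t) ∑ₖ hₖ e^{i⟨θ,hₖ⟩}` (componentwise). -/
noncomputable def seqSummary {d t : ℕ} (h : Fin t → EuclideanSpace ℝ (Fin d))
    (θ : EuclideanSpace ℝ (Fin d)) : Fin d → ℂ :=
  fun l => (Complex.I / (t : ℂ)) *
    ∑ k, (h k l : ℂ) * Complex.exp (Complex.I * (⟪θ, h k⟫ : ℝ))

/-- The spectral query `w_k(θ) = (i t/(2π)^d) e^{i⟨θ,hₖ⟩}`. -/
noncomputable def spectralQuery {d t : ℕ} (h : Fin t → EuclideanSpace ℝ (Fin d))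
    (k : Fin t) (θ : EuclideanSpace ℝ (Fin d)) : ℂ :=
  (Complex.I * (t : ℂ) / ((2 * Real.pi) ^ d : ℝ)) *
    Complex.exp (Complex.I * (⟪θ, h k⟫ : ℝ))

private lemma sca_term_eq (t : ℕ) (ht' : (t:ℂ) ≠ 0) (c : ℝ) (hc : c ≠ 0) (aj ak x y z : ℝ) :
    (Complex.I / (t:ℂ)) * ((aj:ℂ) * Complex.exp (Complex.I * (x:ℝ))) *
      ((ak:ℂ) * (-(Complex.I * (t:ℂ)) / (c:ℝ) * Complex.exp (-(Complex.I * (y:ℝ))))) *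
      (Real.exp z : ℂ)
    = Complex.exp ((z:ℂ) + Complex.I * ((x - y : ℝ))) * (((ak:ℂ) / (c:ℝ)) * (aj:ℂ)) := by
  rw [Complex.ofReal_exp, show ((z:ℂ) + Complex.I * ((x - y:ℝ))) =
    Complex.I * (x:ℝ) + (-(Complex.I * (y:ℝ)) + (z:ℂ)) by push_cast; ring,
    Complex.exp_add, Complex.exp_add]
  have hc' : ((c:ℝ):ℂ) ≠ 0 := by exact_mod_cast Complex.ofReal_ne_zero.2 hc
  field_simp
  ring_nf
  rw [Complex.I_sq]
  ring

/-- **SCA subsumes arbitrary linear combinations (regularized form of Corollary 4).**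
For pairwise distinct `h₁, …, h_t ∈ ℝ^d` and arbitrary coefficients `αₖ ∈ ℝ`, with the
composite spectral query `w = ∑ₖ αₖ wₖ`, as `σ → 0⁺` the Gaussian-regularized readout
`(4πσ)^{d/2} ∫ S(θ) * conj (w θ) * e^{−σ‖θ‖²} dθ` converges to `∑ₖ αₖ hₖ`. -/
theorem sca_subsumes_linear_combinations
    (d t : ℕ) (ht : 0 < t) (h : Fin t → EuclideanSpace ℝ (Fin d))
    (hdist : Function.Injective h) (α : Fin t → ℝ) :
    Tendsto
      (fun σ : ℝ =>
        ((4 * Real.pi * σ) ^ ((d : ℝ) / 2) : ℝ) •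
          ∫ θ : EuclideanSpace ℝ (Fin d),
            (fun l : Fin d =>
              seqSummary h θ l *
                (starRingEnd ℂ) (∑ k, (α k : ℂ) * spectralQuery h k θ) *
                (Real.exp (-σ * ‖θ‖ ^ 2) : ℂ)))
      (nhdsWithin 0 (Set.Ioi 0))
      (nhds (fun l : Fin d => ∑ k, (α k : ℂ) * (h k l : ℂ))) := by
  have ht' : (t:ℂ) ≠ 0 := Nat.cast_ne_zero.2 ht.ne'
  have h2π : (0:ℝ) < 2 * Real.pi := by positivity
  have hc0 : ((2 * Real.pi) ^ d : ℝ) ≠ 0 := by positivity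
  apply Tendsto.congr' (f₁ := fun σ : ℝ => fun l : Fin d =>
    ∑ j, ∑ k, (α k : ℂ) * (h j l : ℂ) *
      ((Real.exp (-‖h j - h k‖ ^ 2 / (4 * σ)) : ℝ) : ℂ))
  · -- eventual equality on (0, ∞)
    filter_upwards [self_mem_nhdsWithin] with σ hσ
    have hσ0 : (0:ℝ) < σ := hσ
    -- rewrite the integrand as a double sum of gaussian-type functions times constant vectors
    have hintegrand : (fun θ : EuclideanSpace ℝ (Fin d) => (fun l : Fin d =>
        seqSummary h θ l * (starRingEnd ℂ) (∑ k, (α k : ℂ) * spectralQuery h k θ) *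
          (Real.exp (-σ * ‖θ‖ ^ 2) : ℂ)))
        = fun θ : EuclideanSpace ℝ (Fin d) => ∑ j, ∑ k,
            Complex.exp (-(σ:ℂ) * (‖θ‖:ℝ) ^ 2 + Complex.I * ((⟪h j - h k, θ⟫ : ℝ) : ℂ)) •
              (fun l : Fin d => ((α k : ℂ) / (((2 * Real.pi) ^ d : ℝ) : ℂ)) * (h j l : ℂ)) := by
      funext θ
      funext l
      simp only [seqSummary, spectralQuery, Finset.sum_apply, Pi.smul_apply, smul_eq_mul,
        map_sum, map_mul, Complex.conj_ofReal, Finset.mul_sum, Finset.sum_mul]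
      rw [Finset.sum_comm (γ := Fin t)]
      refine Finset.sum_congr rfl fun j _ => Finset.sum_congr rfl fun k _ => ?_
      have hconj : (starRingEnd ℂ) (Complex.exp (Complex.I * ((⟪θ, h k⟫ : ℝ) : ℂ)))
          = Complex.exp (-(Complex.I * ((⟪θ, h k⟫ : ℝ) : ℂ))) := by
        rw [← Complex.exp_conj]
        congr 1
        simp [Complex.conj_I]
      have hIc : (starRingEnd ℂ) (Complex.I * (t:ℂ) / (((2 * Real.pi) ^ d : ℝ) : ℂ))
          = -(Complex.I * (t:ℂ)) / (((2 * Real.pi) ^ d : ℝ) : ℂ) := by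
        rw [map_div₀, map_mul, Complex.conj_I, Complex.conj_ofReal, map_natCast]
        ring
      rw [hconj, hIc]
      rw [sca_term_eq t ht' ((2 * Real.pi) ^ d) hc0 (h j l) (α k)
        (⟪θ, h j⟫ : ℝ) (⟪θ, h k⟫ : ℝ) (-σ * ‖θ‖ ^ 2)]
      have hexpo : (((-σ * ‖θ‖ ^ 2 : ℝ)) : ℂ) +
            Complex.I * (((⟪θ, h j⟫ : ℝ) - (⟪θ, h k⟫ : ℝ) : ℝ) : ℂ)
          = -(σ:ℂ) * (‖θ‖:ℝ) ^ 2 + Complex.I * ((⟪h j - h k, θ⟫ : ℝ) : ℂ) := by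
        rw [inner_sub_left, real_inner_comm (h j) θ, real_inner_comm (h k) θ]
        push_cast
        ring
      rw [hexpo]
    rw [hintegrand]
    -- integrability of each term
    have hint : ∀ j k : Fin t, Integrable (fun θ : EuclideanSpace ℝ (Fin d) =>
        Complex.exp (-(σ:ℂ) * (‖θ‖:ℝ) ^ 2 + Complex.I * ((⟪h j - h k, θ⟫ : ℝ) : ℂ))) := by
      intro j k
      exact GaussianFourier.integrable_cexp_neg_mul_sq_norm_add
        (by simpa using hσ0) Complex.I (h j - h k)
    -- value of each gaussian integral
    have key : ∀ j k : Fin t,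
        (∫ θ : EuclideanSpace ℝ (Fin d), Complex.exp (-(σ:ℂ) * (‖θ‖:ℝ) ^ 2 +
            Complex.I * ((⟪h j - h k, θ⟫ : ℝ) : ℂ)))
          = ((((Real.pi / σ) ^ ((d:ℝ)/2) : ℝ)) : ℂ) *
            ((Real.exp (-‖h j - h k‖ ^ 2 / (4 * σ)) : ℝ) : ℂ) := by
      intro j k
      rw [GaussianFourier.integral_cexp_neg_mul_sq_norm_add (by simpa using hσ0) Complex.I
        (h j - h k)]
      congr 1
      · rw [show (Real.pi / (σ:ℂ)) = (((Real.pi / σ : ℝ)) : ℂ) by push_cast; ring,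
          show ((Module.finrank ℝ (EuclideanSpace ℝ (Fin d)) : ℂ) / 2) = (((d:ℝ)/2 : ℝ) : ℂ) by
            rw [show Module.finrank ℝ (EuclideanSpace ℝ (Fin d)) = d
              from finrank_euclideanSpace_fin]
            push_cast
            ring,
          ← Complex.ofReal_cpow (by positivity)]
      · rw [Complex.ofReal_exp]
        congr 1
        rw [Complex.I_sq]
        push_cast
        ring
    rw [integral_finset_sum _ (fun j _ => integrable_finset_sum _
      (fun k _ => (hint j k).smul_const _))]
    simp_rw [integral_finset_sum _ (fun k _ => (hint _ k).smul_const _),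
      integral_smul_const, key]
    -- now pointwise identification
    funext l
    symm
    simp only [Pi.smul_apply, Finset.sum_apply, smul_eq_mul, Complex.real_smul]
    rw [Finset.mul_sum]
    refine Finset.sum_congr rfl fun j _ => ?_
    rw [Finset.mul_sum]
    refine Finset.sum_congr rfl fun k _ => ?_
    have hrp : ((4 * Real.pi * σ) ^ ((d:ℝ)/2) : ℝ) * ((Real.pi / σ) ^ ((d:ℝ)/2)) =
        (2 * Real.pi) ^ d := by
      rw [← Real.mul_rpow (by positivity) (by positivity),
        show (4 * Real.pi * σ) * (Real.pi / σ) = (2 * Real.pi) ^ 2 by field_simp; ring,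
        ← Real.rpow_natCast (2 * Real.pi) 2, ← Real.rpow_mul h2π.le,
        show ((2:ℕ):ℝ) * ((d:ℝ)/2) = (d:ℝ) by push_cast; ring, Real.rpow_natCast]
    have hmul : (((4 * Real.pi * σ) ^ ((d:ℝ)/2) : ℝ) : ℂ) *
          ((((Real.pi / σ) ^ ((d:ℝ)/2) : ℝ)) : ℂ)
        = (((2 * Real.pi) ^ d : ℝ) : ℂ) := by
      rw [← Complex.ofReal_mul, hrp]
    have hc0' : (((2 * Real.pi) ^ d : ℝ) : ℂ) ≠ 0 := Complex.ofReal_ne_zero.2 hc0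
    calc (((4 * Real.pi * σ) ^ ((d:ℝ)/2) : ℝ) : ℂ) *
            (((((Real.pi / σ) ^ ((d:ℝ)/2) : ℝ)) : ℂ) *
              ((Real.exp (-‖h j - h k‖ ^ 2 / (4 * σ)) : ℝ) : ℂ) *
              (((α k : ℂ) / (((2 * Real.pi) ^ d : ℝ) : ℂ)) * (h j l : ℂ)))
        = ((((4 * Real.pi * σ) ^ ((d:ℝ)/2) : ℝ) : ℂ) *
              ((((Real.pi / σ) ^ ((d:ℝ)/2) : ℝ)) : ℂ)) *
            (((Real.exp (-‖h j - h k‖ ^ 2 / (4 * σ)) : ℝ) : ℂ) *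
              (((α k : ℂ) / (((2 * Real.pi) ^ d : ℝ) : ℂ)) * (h j l : ℂ))) := by ring
      _ = (α k : ℂ) * (h j l : ℂ) *
            ((Real.exp (-‖h j - h k‖ ^ 2 / (4 * σ)) : ℝ) : ℂ) := by
          rw [hmul]
          have habs : ∀ C E a b : ℂ, C ≠ 0 → C * (E * (a / C * b)) = a * b * E := by
            intro C E a b hC
            field_simp
          exact habs _ _ _ _ hc0'
  · -- the limit
    rw [tendsto_pi_nhds]
    intro l
    have hterm : ∀ j k : Fin t, Tendsto (fun σ : ℝ => (α k : ℂ) * (h j l : ℂ) *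
        ((Real.exp (-‖h j - h k‖ ^ 2 / (4 * σ)) : ℝ) : ℂ))
        (nhdsWithin 0 (Set.Ioi 0))
        (nhds (if k = j then (α k : ℂ) * (h j l : ℂ) else 0)) := by
      intro j k
      by_cases hjk : k = j
      · subst hjk
        rw [if_pos rfl]
        have heq : ∀ σ : ℝ, (α k : ℂ) * (h k l : ℂ) *
            ((Real.exp (-‖h k - h k‖ ^ 2 / (4 * σ)) : ℝ) : ℂ) = (α k : ℂ) * (h k l : ℂ) := by
          intro σ
          simp
        simp_rw [heq]
        exact tendsto_const_nhds
      · rw [if_neg hjk]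
        have hne : h j - h k ≠ 0 := sub_ne_zero.2 fun hh => hjk (hdist hh).symm
        have hnorm : (0:ℝ) < ‖h j - h k‖ := norm_pos_iff.2 hne
        have hpos : (0:ℝ) < ‖h j - h k‖ ^ 2 := by positivity
        have h4 : Tendsto (fun σ : ℝ => 4 * σ) (nhdsWithin 0 (Set.Ioi 0))
            (nhdsWithin 0 (Set.Ioi 0)) := by
          rw [tendsto_nhdsWithin_iff]
          constructor
          · have : Tendsto (fun σ : ℝ => 4 * σ) (nhds 0) (nhds 0) := by
              have := ((continuous_const.mul continuous_id).tendsto (0:ℝ) :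
                Tendsto (fun σ : ℝ => 4 * (id σ)) (nhds 0) (nhds (4 * id 0)))
              convert this using 2 <;> simp
            exact this.mono_left nhdsWithin_le_nhds
          · filter_upwards [self_mem_nhdsWithin] with σ hσ
            exact mul_pos (by norm_num : (0:ℝ) < 4) hσ
        have hinv : Tendsto (fun σ : ℝ => (4 * σ)⁻¹) (nhdsWithin 0 (Set.Ioi 0)) atTop :=
          tendsto_inv_nhdsGT_zero.comp h4
        have hbot : Tendsto (fun σ : ℝ => -‖h j - h k‖ ^ 2 / (4 * σ))
            (nhdsWithin 0 (Set.Ioi 0)) atBot := by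
          have := (hinv.const_mul_atTop hpos)
          have hneg := tendsto_neg_atTop_atBot.comp this
          refine hneg.congr fun σ => ?_
          simp [div_eq_mul_inv, neg_div]
        have hexp : Tendsto (fun σ : ℝ => Real.exp (-‖h j - h k‖ ^ 2 / (4 * σ)))
            (nhdsWithin 0 (Set.Ioi 0)) (nhds 0) :=
          Real.tendsto_exp_atBot.comp hbot
        have hcexp : Tendsto (fun σ : ℝ =>
            ((Real.exp (-‖h j - h k‖ ^ 2 / (4 * σ)) : ℝ) : ℂ))
            (nhdsWithin 0 (Set.Ioi 0)) (nhds 0) := by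
          have := (Complex.continuous_ofReal.tendsto 0).comp hexp
          simpa [Function.comp_def, -Complex.ofReal_exp] using this
        simpa using hcexp.const_mul ((α k : ℂ) * (h j l : ℂ))
    have := tendsto_finset_sum Finset.univ (fun j (_ : j ∈ Finset.univ) =>
      tendsto_finset_sum Finset.univ (fun k (_ : k ∈ Finset.univ) => hterm j k))
    simp only [Finset.sum_ite_eq', Finset.mem_univ, if_true] at this
    exact this
end

section
/- SCA reproduces softmax attention (special case of Corollary 4): let h_1, …, h_t be pairwise distinct vectors in ℝ^d and let q ∈ ℝ^d be any query vector. Define the softmax weights α_k = exp(⟨q,h_k⟩) / Σ_{l=1}^{t} exp(⟨q,h_l⟩) and the composite spectral query w(θ) = Σ_{k=1}^{t} α_k w_k(θ). Then as σ → 0⁺ the Gaussian-regularized readout (4πσ)^{d/2} ∫_{ℝ^d} S(θ) · conj(w(θ)) · e^{−σ‖θ‖²} dθ converges to the softmax attention output Σ_{k=1}^{t} α_k h_k. -/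
open MeasureTheory Real Filter RealInnerProductSpace

/-- The softmax attention weights `αₖ = exp⟨q,hₖ⟩ / ∑ₗ exp⟨q,hₗ⟩`. -/
noncomputable def softmaxWeight {d t : ℕ} (h : Fin t → EuclideanSpace ℝ (Fin d))
    (q : EuclideanSpace ℝ (Fin d)) (k : Fin t) : ℝ :=
  Real.exp (⟪q, h k⟫ : ℝ) / ∑ l, Real.exp (⟪q, h l⟫ : ℝ)

lemma gauss_int {d : ℕ} (σ : ℝ) (hσ : 0 < σ) (w : EuclideanSpace ℝ (Fin d)) :
    ∫ θ : EuclideanSpace ℝ (Fin d),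
        Complex.exp (-(σ:ℂ) * (‖θ‖:ℂ)^2 + Complex.I * ((⟪w, θ⟫ : ℝ) : ℂ)) =
      (((π / σ) ^ ((d:ℝ)/2) : ℝ) : ℂ) * (Real.exp (-‖w‖^2 / (4*σ)) : ℂ) := by
  have hb : 0 < ((σ:ℂ)).re := by simpa using hσ
  rw [GaussianFourier.integral_cexp_neg_mul_sq_norm_add hb Complex.I w]
  rw [finrank_euclideanSpace_fin]
  congr 1
  · rw [show ((d:ℂ)/2) = (((d:ℝ)/2 : ℝ) : ℂ) by push_cast; ring,
      ← Complex.ofReal_div, ← Complex.ofReal_cpow (by positivity) ((d:ℝ)/2)]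
  · rw [Complex.I_sq, Complex.ofReal_exp]
    congr 1
    push_cast
    ring

lemma gauss_integrable {d : ℕ} (σ : ℝ) (hσ : 0 < σ) (w : EuclideanSpace ℝ (Fin d)) :
    Integrable (fun θ : EuclideanSpace ℝ (Fin d) =>
        Complex.exp (-(σ:ℂ) * (‖θ‖:ℂ)^2 + Complex.I * ((⟪w, θ⟫ : ℝ) : ℂ))) := by
  have hb : 0 < ((σ:ℂ)).re := by simpa using hσ
  exact GaussianFourier.integrable_cexp_neg_mul_sq_norm_add hb Complex.I w

lemma integrand_rw {d t : ℕ} (ht : 0 < t) (h : Fin t → EuclideanSpace ℝ (Fin d))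
    (q : EuclideanSpace ℝ (Fin d)) (σ : ℝ) (θ : EuclideanSpace ℝ (Fin d)) :
    (fun l : Fin d =>
        seqSummary h θ l *
          (starRingEnd ℂ) (∑ k, (softmaxWeight h q k : ℂ) * spectralQuery h k θ) *
          (Real.exp (-σ * ‖θ‖ ^ 2) : ℂ)) =
      ∑ k, ∑ j, Complex.exp (-(σ:ℂ) * (‖θ‖:ℂ)^2 + Complex.I * ((⟪h k - h j, θ⟫ : ℝ) : ℂ)) •
        (fun l : Fin d => (softmaxWeight h q j : ℂ) * (h k l : ℂ) * (((2*Real.pi)^d : ℝ) : ℂ)⁻¹) := by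
  have htc : (t : ℂ) ≠ 0 := Nat.cast_ne_zero.mpr ht.ne'
  have hX : ((((2*Real.pi)^d : ℝ)) : ℂ) ≠ 0 := by
    simp only [ne_eq, Complex.ofReal_eq_zero]
    positivity
  funext l
  simp only [Finset.sum_apply, Pi.smul_apply, smul_eq_mul]
  unfold seqSummary spectralQuery
  simp only [map_sum, map_mul, map_div₀, Complex.conj_ofReal, Complex.conj_I, map_natCast,
    ← Complex.exp_conj, Finset.mul_sum, Finset.sum_mul]
  rw [Finset.sum_comm]
  refine Finset.sum_congr rfl fun k _ => Finset.sum_congr rfl fun j _ => ?_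
  have e1 : (⟪h k - h j, θ⟫ : ℝ) = ⟪θ, h k⟫ - ⟪θ, h j⟫ := by
    rw [inner_sub_left, real_inner_comm (h k) θ, real_inner_comm (h j) θ]
  rw [e1]
  rw [show -(σ:ℂ) * (‖θ‖:ℂ)^2 + Complex.I * (((⟪θ, h k⟫ - ⟪θ, h j⟫ : ℝ)) : ℂ)
      = ((-σ * ‖θ‖^2 : ℝ) : ℂ) + (Complex.I * ((⟪θ, h k⟫ : ℝ) : ℂ)
        + (-(Complex.I * ((⟪θ, h j⟫ : ℝ) : ℂ)))) by push_cast; ring,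
    Complex.exp_add, Complex.exp_add, Complex.ofReal_exp]
  field_simp
  ring_nf
  simp only [Complex.I_sq]
  field_simp

/-- **SCA reproduces softmax attention (special case of Corollary 4).**
For pairwise distinct `h₁, …, h_t ∈ ℝ^d` and any query `q ∈ ℝ^d`, with softmax
weights `αₖ` and composite spectral query `w = ∑ₖ αₖ wₖ`, as `σ → 0⁺` the
Gaussian-regularized readout converges to the softmax attention output `∑ₖ αₖ hₖ`. -/
theorem sca_reproduces_softmax_attention
    (d t : ℕ) (ht : 0 < t) (h : Fin t → EuclideanSpace ℝ (Fin d))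
    (hdist : Function.Injective h) (q : EuclideanSpace ℝ (Fin d)) :
    Tendsto
      (fun σ : ℝ =>
        ((4 * Real.pi * σ) ^ ((d : ℝ) / 2) : ℝ) •
          ∫ θ : EuclideanSpace ℝ (Fin d),
            (fun l : Fin d =>
              seqSummary h θ l *
                (starRingEnd ℂ) (∑ k, (softmaxWeight h q k : ℂ) * spectralQuery h k θ) *
                (Real.exp (-σ * ‖θ‖ ^ 2) : ℂ)))
      (nhdsWithin 0 (Set.Ioi 0))
      (nhds (fun l : Fin d => ∑ k, (softmaxWeight h q k : ℂ) * (h k l : ℂ))) := by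
  set g : ℝ → (Fin d → ℂ) := fun σ => fun l : Fin d =>
    ∑ k, ∑ j, (softmaxWeight h q j : ℂ) * (h k l : ℂ) *
      (Real.exp (-‖h k - h j‖^2 / (4*σ)) : ℂ) with hg
  have key : ∀ σ ∈ Set.Ioi (0:ℝ),
      (((4 * Real.pi * σ) ^ ((d : ℝ) / 2) : ℝ) •
        ∫ θ : EuclideanSpace ℝ (Fin d),
          (fun l : Fin d =>
            seqSummary h θ l *
              (starRingEnd ℂ) (∑ k, (softmaxWeight h q k : ℂ) * spectralQuery h k θ) *
              (Real.exp (-σ * ‖θ‖ ^ 2) : ℂ))) = g σ := by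
    intro σ hσ
    rw [Set.mem_Ioi] at hσ
    have hfun : (fun θ : EuclideanSpace ℝ (Fin d) => (fun l : Fin d =>
        seqSummary h θ l *
          (starRingEnd ℂ) (∑ k, (softmaxWeight h q k : ℂ) * spectralQuery h k θ) *
          (Real.exp (-σ * ‖θ‖ ^ 2) : ℂ)))
        = fun θ => ∑ k, ∑ j,
            Complex.exp (-(σ:ℂ) * (‖θ‖:ℂ)^2 + Complex.I * ((⟪h k - h j, θ⟫ : ℝ) : ℂ)) •
            (fun l : Fin d => (softmaxWeight h q j : ℂ) * (h k l : ℂ) *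
              (((2*Real.pi)^d : ℝ) : ℂ)⁻¹) :=
      funext fun θ => integrand_rw ht h q σ θ
    rw [hfun]
    rw [integral_finset_sum _ (fun k _ => integrable_finset_sum _
      (fun j _ => (gauss_integrable σ hσ (h k - h j)).smul_const _))]
    simp_rw [integral_finset_sum _ (fun j _ => (gauss_integrable σ hσ _).smul_const _),
      integral_smul_const, gauss_int σ hσ]
    have hconst : ((4 * Real.pi * σ) ^ ((d : ℝ) / 2) : ℝ) * ((π / σ) ^ ((d:ℝ)/2) : ℝ)
        = ((2*Real.pi)^d : ℝ) := by
      rw [← Real.mul_rpow (by positivity) (by positivity)]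
      rw [show 4 * π * σ * (π / σ) = (2*π)^2 by field_simp; ring]
      rw [show ((2*π)^2 : ℝ) = (2*π) ^ ((2:ℕ):ℝ) from (Real.rpow_natCast _ 2).symm,
        ← Real.rpow_mul (by positivity)]
      push_cast
      rw [show (2:ℝ) * ((d:ℝ)/2) = (d:ℝ) by ring]
      exact Real.rpow_natCast _ d
    funext l
    simp only [Pi.smul_apply, Finset.sum_apply, Finset.smul_sum, Pi.smul_apply, smul_eq_mul,
      Complex.real_smul]
    refine Finset.sum_congr rfl fun k _ => Finset.sum_congr rfl fun j _ => ?_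
    have hone : (((4 * Real.pi * σ) ^ ((d : ℝ) / 2) : ℝ) : ℂ) *
        ((((π / σ) ^ ((d:ℝ)/2) : ℝ)) : ℂ) * ((((2*Real.pi)^d : ℝ)) : ℂ)⁻¹ = 1 := by
      rw [← Complex.ofReal_mul, hconst, ← Complex.ofReal_inv, ← Complex.ofReal_mul]
      rw [mul_inv_cancel₀ (by positivity)]
      norm_num
    calc ((((4 * Real.pi * σ) ^ ((d : ℝ) / 2) : ℝ)) : ℂ) *
          (((((π / σ) ^ ((d:ℝ)/2) : ℝ)) : ℂ) * ((Real.exp (-‖h k - h j‖^2 / (4*σ)) : ℝ) : ℂ) *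
            ((softmaxWeight h q j : ℂ) * (h k l : ℂ) * ((((2*Real.pi)^d : ℝ)) : ℂ)⁻¹))
        = ((((4 * Real.pi * σ) ^ ((d : ℝ) / 2) : ℝ) : ℂ) *
            ((((π / σ) ^ ((d:ℝ)/2) : ℝ)) : ℂ) * ((((2*Real.pi)^d : ℝ)) : ℂ)⁻¹) *
          ((softmaxWeight h q j : ℂ) * (h k l : ℂ) *
            ((Real.exp (-‖h k - h j‖^2 / (4*σ)) : ℝ) : ℂ)) := by ring
      _ = _ := by rw [hone, one_mul]
  have hev : (fun σ : ℝ =>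
      ((4 * Real.pi * σ) ^ ((d : ℝ) / 2) : ℝ) •
        ∫ θ : EuclideanSpace ℝ (Fin d),
          (fun l : Fin d =>
            seqSummary h θ l *
              (starRingEnd ℂ) (∑ k, (softmaxWeight h q k : ℂ) * spectralQuery h k θ) *
              (Real.exp (-σ * ‖θ‖ ^ 2) : ℂ))) =ᶠ[nhdsWithin 0 (Set.Ioi 0)] g :=
    eventually_nhdsWithin_of_forall key
  refine Tendsto.congr' hev.symm ?_
  rw [tendsto_pi_nhds]
  intro l
  have htarget : (∑ k, (softmaxWeight h q k : ℂ) * (h k l : ℂ))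
      = ∑ k, ∑ j, (softmaxWeight h q j : ℂ) * (h k l : ℂ) * (if k = j then (1:ℂ) else 0) := by
    simp
  rw [htarget]
  refine tendsto_finset_sum _ fun k _ => tendsto_finset_sum _ fun j _ => ?_
  rcases eq_or_ne k j with rfl | hkj
  · simp only [if_pos rfl, mul_one, sub_self, norm_zero]
    norm_num
  · simp only [if_neg hkj, mul_zero]
    have hw : (0:ℝ) < ‖h k - h j‖^2 := by
      have h0 : h k - h j ≠ 0 := sub_ne_zero_of_ne (fun e => hkj (hdist e))
      have h0' : (0:ℝ) < ‖h k - h j‖ := norm_pos_iff.mpr h0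
      positivity
    have h1 : Tendsto (fun σ : ℝ => -‖h k - h j‖^2 / (4*σ)) (nhdsWithin 0 (Set.Ioi 0)) atBot := by
      have : (fun σ : ℝ => -‖h k - h j‖^2 / (4*σ)) = fun σ : ℝ => (-‖h k - h j‖^2/4) * σ⁻¹ := by
        funext σ; ring
      rw [this]
      exact Tendsto.const_mul_atTop_of_neg (by linarith) tendsto_inv_nhdsGT_zero
    have h2 : Tendsto (fun σ : ℝ => Real.exp (-‖h k - h j‖^2 / (4*σ)))
        (nhdsWithin 0 (Set.Ioi 0)) (nhds 0) := Real.tendsto_exp_atBot.comp h1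
    have h4 := (Complex.continuous_ofReal.tendsto 0).comp h2
    have h5 := h4.const_mul ((softmaxWeight h q j : ℂ) * (h k l : ℂ))
    simpa [Function.comp] using h5
end
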